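/- Let ζ :⊆ Y ⇉ ℕ^ℕ be a probe for a represented space Y, let T :⊆ X ⇉ Y be a transparent cylinder, and let f :⊆ A ⇉ B be a partial multivalued function between represented spaces. Then player II has a winning strategy in the (ζ, T)-Wadge game for f if and only if f ≤_W^c T. -/

import Mathlib

open Filter Topology

/-! ### Partial functions on Baire space -/

/-- A partial function on Baire space, given by a domain and an underlying total
function (whose values outside the domain are irrelevant). -/
structure PFunB where
  dom : Set (ℕ → ℕ)
  toFun : (ℕ → ℕ) → (ℕ → ℕ)

/-- A partial function on Baire space is continuous if its underlying function is
continuous on its domain. -/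
def PFunB.IsContinuous (F : PFunB) : Prop := ContinuousOn F.toFun F.dom

/-- Composition of partial functions on Baire space. -/
def PFunB.comp (F G : PFunB) : PFunB where
  dom := {p | p ∈ G.dom ∧ G.toFun p ∈ F.dom}
  toFun := fun p => F.toFun (G.toFun p)

/-- A partial function from (Baire space) × (Baire space) to Baire space. -/
structure PFunB2 where
  dom : Set ((ℕ → ℕ) × (ℕ → ℕ))
  toFun : (ℕ → ℕ) × (ℕ → ℕ) → (ℕ → ℕ)

def PFunB2.IsContinuous (K : PFunB2) : Prop := ContinuousOn K.toFun K.dom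

/-! ### Coding of sequences -/

/-- The `n`-th column of `p : ℕ → ℕ`, via the standard pairing bijection. -/
def col (p : ℕ → ℕ) (n : ℕ) : ℕ → ℕ := fun k => p (Nat.pair n k)

/-- Interleaving pairing of two elements of Baire space. -/
def pairB (p q : ℕ → ℕ) : ℕ → ℕ := fun n => if n % 2 = 0 then p (n / 2) else q (n / 2)

def leftB (r : ℕ → ℕ) : ℕ → ℕ := fun n => r (2 * n)

def rightB (r : ℕ → ℕ) : ℕ → ℕ := fun n => r (2 * n + 1)

theorem leftB_pairB (p q : ℕ → ℕ) : leftB (pairB p q) = p := by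
  funext n
  show (if (2 * n) % 2 = 0 then p ((2 * n) / 2) else q ((2 * n) / 2)) = p n
  rw [if_pos (by omega)]
  congr 1
  omega

theorem rightB_pairB (p q : ℕ → ℕ) : rightB (pairB p q) = q := by
  funext n
  show (if (2 * n + 1) % 2 = 0 then p ((2 * n + 1) / 2) else q ((2 * n + 1) / 2)) = q n
  rw [if_neg (by omega)]
  congr 1
  omega

/-! ### Represented spaces -/

/-- A represented space: a set `X` together with a partial surjection from Baire space
onto `X` (modelled as a total map together with a domain, such that every point has a
name in the domain). -/
structure RepSpace (X : Type u) where
  dom : Set (ℕ → ℕ)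
  map : (ℕ → ℕ) → X
  surj : ∀ x : X, ∃ p ∈ dom, map p = x

/-- Baire space with the identity representation. -/
def idRep : RepSpace (ℕ → ℕ) := ⟨Set.univ, id, fun x => ⟨x, trivial, rfl⟩⟩

/-- The representation of `X`, viewed as a partial multivalued function from Baire
space to `X` (with empty value outside the domain). -/
def RepSpace.toMV {X : Type u} (δ : RepSpace X) : (ℕ → ℕ) → Set X :=
  fun p => {x | p ∈ δ.dom ∧ δ.map p = x}

/-- Product of represented spaces, via the interleaving pairing homeomorphism. -/
def RepSpace.prod {X : Type u} {Y : Type v} (δX : RepSpace X) (δY : RepSpace Y) :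
    RepSpace (X × Y) where
  dom := {r | leftB r ∈ δX.dom ∧ rightB r ∈ δY.dom}
  map := fun r => (δX.map (leftB r), δY.map (rightB r))
  surj := by
    rintro ⟨x, y⟩
    obtain ⟨p, hp, hpx⟩ := δX.surj x
    obtain ⟨q, hq, hqy⟩ := δY.surj y
    refine ⟨pairB p q, ⟨?_, ?_⟩, ?_⟩
    · rw [leftB_pairB]; exact hp
    · rw [rightB_pairB]; exact hq
    · show (δX.map (leftB (pairB p q)), δY.map (rightB (pairB p q))) = (x, y)
      rw [leftB_pairB, rightB_pairB, hpx, hqy]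

/-- The represented space of sequences in `X`: `δ(p) = (δ_X((p)_n))_n`. -/
def RepSpace.seq {X : Type u} (δ : RepSpace X) : RepSpace (ℕ → X) where
  dom := {p | ∀ n, col p n ∈ δ.dom}
  map := fun p n => δ.map (col p n)
  surj := by
    intro x
    choose q hq hmap using fun n => δ.surj (x n)
    have hcol : ∀ n, col (fun m => q (Nat.unpair m).1 (Nat.unpair m).2) n = q n := by
      intro n; funext k; simp [col]
    refine ⟨fun m => q (Nat.unpair m).1 (Nat.unpair m).2, fun n => ?_, ?_⟩
    · rw [hcol]; exact hq n
    · funext n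
      show δ.map (col (fun m => q (Nat.unpair m).1 (Nat.unpair m).2) n) = x n
      rw [hcol]; exact hmap n

/-! ### Partial multivalued functions -/

/-- Composition of partial multivalued functions (with the domain convention
`dom (f ∘ g) = {x ∈ dom g : g x ⊆ dom f}`; a partial multivalued function is modelled
as a `Set`-valued function whose domain is the set of points with nonempty value). -/
def MComp {X : Type u} {Y : Type v} {Z : Type w} (f : Y → Set Z) (g : X → Set Y) :
    X → Set Z :=
  fun x => {z | (∀ y ∈ g x, (f y).Nonempty) ∧ ∃ y ∈ g x, z ∈ f y}

/-- `f` tightens `g`: `dom g ⊆ dom f` and `f x ⊆ g x` for every `x ∈ dom g`. -/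
def Tightens {X : Type u} {Y : Type v} (f g : X → Set Y) : Prop :=
  ∀ x, (g x).Nonempty → (f x).Nonempty ∧ f x ⊆ g x

/-- `F` is a realizer of the partial multivalued function `f`. -/
def Realizes {X : Type u} {Y : Type v} (δX : RepSpace X) (δY : RepSpace Y)
    (F : PFunB) (f : X → Set Y) : Prop :=
  ∀ p ∈ δX.dom, (f (δX.map p)).Nonempty →
    p ∈ F.dom ∧ F.toFun p ∈ δY.dom ∧ δY.map (F.toFun p) ∈ f (δX.map p)

/-- A partial multivalued function between represented spaces is continuous if it has a
continuous realizer. -/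
def MCts {X : Type u} {Y : Type v} (δX : RepSpace X) (δY : RepSpace Y)
    (f : X → Set Y) : Prop :=
  ∃ F : PFunB, F.IsContinuous ∧ Realizes δX δY F f

/-- Strong continuous Weihrauch reducibility `f ≤_sW^c g`. -/
def StrongWc {A : Type u} {B : Type v} {C : Type w} {D : Type x}
    (δA : RepSpace A) (δB : RepSpace B) (δC : RepSpace C) (δD : RepSpace D)
    (f : A → Set B) (g : C → Set D) : Prop :=
  ∃ K H : PFunB, K.IsContinuous ∧ H.IsContinuous ∧
    ∀ G : PFunB, Realizes δC δD G g → Realizes δA δB (K.comp (G.comp H)) f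

/-- Continuous Weihrauch reducibility `f ≤_W^c g`. -/
def Wc {A : Type u} {B : Type v} {C : Type w} {D : Type x}
    (δA : RepSpace A) (δB : RepSpace B) (δC : RepSpace C) (δD : RepSpace D)
    (f : A → Set B) (g : C → Set D) : Prop :=
  ∃ (K : PFunB2) (H : PFunB), K.IsContinuous ∧ H.IsContinuous ∧
    ∀ G : PFunB, Realizes δC δD G g →
      Realizes δA δB
        ⟨{p | p ∈ H.dom ∧ H.toFun p ∈ G.dom ∧ (p, G.toFun (H.toFun p)) ∈ K.dom},
          fun p => K.toFun (p, G.toFun (H.toFun p))⟩ f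

/-- Continuous Weihrauch equivalence `f ≡_W^c g`. -/
def WcEquiv {A : Type u} {B : Type v} {C : Type w} {D : Type x}
    (δA : RepSpace A) (δB : RepSpace B) (δC : RepSpace C) (δD : RepSpace D)
    (f : A → Set B) (g : C → Set D) : Prop :=
  Wc δA δB δC δD f g ∧ Wc δC δD δA δB g f

/-- `id_{ℕ^ℕ} × g` for a partial multivalued `g`. -/
def idProd {C : Type u} {D : Type v} (g : C → Set D) :
    (ℕ → ℕ) × C → Set ((ℕ → ℕ) × D) :=
  fun pc => {qd | qd.1 = pc.1 ∧ qd.2 ∈ g pc.2}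

/-- `f` is a cylinder if `id_{ℕ^ℕ} × f ≤_sW^c f`. -/
def IsCylinder {X : Type u} {Y : Type v} (δX : RepSpace X) (δY : RepSpace Y)
    (f : X → Set Y) : Prop :=
  StrongWc (idRep.prod δX) (idRep.prod δY) δX δY (idProd f) f

/-- `T :⊆ X ⇉ Y` is transparent: for every continuous `g :⊆ Y ⇉ Y` there is a
continuous `f :⊆ X ⇉ X` with `T ∘ f ⪯ g ∘ T`. -/
def Transparent {X : Type u} {Y : Type v} (δX : RepSpace X) (δY : RepSpace Y)
    (T : X → Set Y) : Prop :=
  ∀ g : Y → Set Y, MCts δY δY g →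
    ∃ f : X → Set X, MCts δX δX f ∧ Tightens (MComp T f) (MComp g T)

/-- `ζ :⊆ Y ⇉ ℕ^ℕ` is a probe for `Y`: it is continuous, and for every continuous
`f :⊆ Y ⇉ ℕ^ℕ` there is a continuous `e :⊆ Y ⇉ Y` with `ζ ∘ e ⪯ f`. -/
def IsProbe {Y : Type u} (δY : RepSpace Y) (ζ : Y → Set (ℕ → ℕ)) : Prop :=
  MCts δY idRep ζ ∧
    ∀ f : Y → Set (ℕ → ℕ), MCts δY idRep f →
      ∃ e : Y → Set Y, MCts δY δY e ∧ Tightens (MComp ζ e) f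

/-- Parallelization of a partial multivalued function. -/
def Parallel {X : Type u} {Y : Type v} (f : X → Set Y) : (ℕ → X) → Set (ℕ → Y) :=
  fun xs => {ys | ∀ n, ys n ∈ f (xs n)}

/-! ### Games -/

/-- A strategy for player II: to each finite sequence of I's moves it assigns a natural
number or a pass (`none`). -/
abbrev Strategy := List ℕ → Option ℕ

/-- The move of player II (following `σ`) after I has played `x 0, …, x n`. -/
def respond (σ : Strategy) (x : ℕ → ℕ) (n : ℕ) : Option ℕ :=
  σ (List.ofFn fun i : Fin (n + 1) => x i)

/-- Player II plays natural numbers at infinitely many rounds of the run against `x`. -/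
def InfPlays (σ : Strategy) (x : ℕ → ℕ) : Prop :=
  {n | (respond σ x n).isSome = true}.Infinite

/-- The element of Baire space built by player II in the run against `x`
(the subsequence of her non-pass moves). -/
noncomputable def output (σ : Strategy) (x : ℕ → ℕ) : ℕ → ℕ :=
  fun k => (respond σ x (Nat.nth (fun n => (respond σ x n).isSome = true) k)).getD 0

/-- The partial multivalued function `δ_B ∘ ζ ∘ T ∘ δ_X :⊆ ℕ^ℕ ⇉ B` used in the winning
condition of the `(ζ, T)`-Wadge game. -/
def GameMap {X : Type u} {Y : Type v} {B : Type w} (δX : RepSpace X) (δB : RepSpace B)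
    (ζ : Y → Set (ℕ → ℕ)) (T : X → Set Y) : (ℕ → ℕ) → Set B :=
  MComp δB.toMV (MComp ζ (MComp T δX.toMV))

/-- `σ` is a winning strategy for player II in the `(ζ, T)`-Wadge game for `f`:
for every run `x` built by player I with `x ∈ dom (f ∘ δ_A)`, player II plays natural
numbers infinitely often, her output `y` lies in `dom (δ_B ∘ ζ ∘ T ∘ δ_X)`, and
`(δ_B ∘ ζ ∘ T ∘ δ_X)(y) ⊆ (f ∘ δ_A)(x)` (runs with `x ∉ dom (f ∘ δ_A)` are won by II
automatically). -/
def WadgeWinning {X : Type u} {Y : Type v} {A : Type w} {B : Type x}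
    (δX : RepSpace X) (δA : RepSpace A) (δB : RepSpace B)
    (ζ : Y → Set (ℕ → ℕ)) (T : X → Set Y) (f : A → Set B) (σ : Strategy) : Prop :=
  ∀ x : ℕ → ℕ, (MComp f δA.toMV x).Nonempty →
    InfPlays σ x ∧
    (GameMap δX δB ζ T (output σ x)).Nonempty ∧
    GameMap δX δB ζ T (output σ x) ⊆ MComp f δA.toMV x

/-! ### lim, isFinite and the Baire hierarchy -/

/-- The partial function `lim :⊆ ℕ^ℕ → ℕ^ℕ`, `lim(p) = lim_n (p)_n` (pointwise limit),
viewed as a partial multivalued function with singleton values on its domain. -/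
def limFn : (ℕ → ℕ) → Set (ℕ → ℕ) :=
  fun p => {q | ∀ k, ∀ᶠ n in atTop, col p n k = q k}

/-- The space `{0,1}^ℕ` of binary sequences. -/
abbrev BSeq : Type := {p : ℕ → ℕ // ∀ n, p n ≤ 1}

/-- `{0,1}^ℕ` with the identity representation (as a subspace of Baire space). -/
def repBSeq : RepSpace BSeq where
  dom := {p | ∀ n, p n ≤ 1}
  map := fun p => ⟨fun n => min (p n) 1, fun _ => min_le_right _ _⟩
  surj := fun x => ⟨x.1, x.2, Subtype.ext (funext fun n => min_eq_left (x.2 n))⟩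

/-- The two-point space `{0,1}`. -/
abbrev TwoPt : Type := {n : ℕ // n ≤ 1}

/-- The two-point space `{0,1}` represented by `δ(p) = p 0`. -/
def repTwo : RepSpace TwoPt where
  dom := {p | p 0 ≤ 1}
  map := fun p => ⟨min (p 0) 1, min_le_right _ _⟩
  surj := fun x => ⟨fun _ => x.1, x.2, Subtype.ext (min_eq_left x.2)⟩

open Classical in
/-- `isFinite(p) = 1` iff `{n : p n = 1}` is finite. -/
noncomputable def isFinite : BSeq → TwoPt :=
  fun p => if {n | p.1 n = 1}.Finite then ⟨1, le_refl 1⟩ else ⟨0, Nat.zero_le 1⟩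

/-- The finite levels of the Baire hierarchy: Baire class 0 functions are the continuous
ones, and Baire class `n+1` functions are pointwise limits of sequences of Baire class
`n` functions. -/
def BaireClass : ℕ → ((ℕ → ℕ) → (ℕ → ℕ)) → Prop
  | 0, f => Continuous f
  | n + 1, f => ∃ g : ℕ → (ℕ → ℕ) → (ℕ → ℕ),
      (∀ k, BaireClass n (g k)) ∧ ∀ x, Tendsto (fun k => g k x) atTop (𝓝 (f x))


/-! ### Auxiliary machinery for the main theorem -/

section WadgeAux

lemma preL_length (x : ℕ → ℕ) (n : ℕ) :
    (List.ofFn fun i : Fin n => x i).length = n := List.length_ofFn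

/-- prefix of length `n` of `x` as a list -/
def preL (x : ℕ → ℕ) (n : ℕ) : List ℕ := List.ofFn fun i : Fin n => x i

lemma preL_len (x : ℕ → ℕ) (n : ℕ) : (preL x n).length = n := List.length_ofFn

lemma preL_eq_iff {x y : ℕ → ℕ} {n : ℕ} : preL x n = preL y n ↔ ∀ i < n, x i = y i := by
  rw [preL, preL, List.ofFn_inj]
  constructor
  · intro h i hi; exact congrFun h ⟨i, hi⟩
  · intro h; funext i; exact h i i.isLt

lemma preL_succ (x : ℕ → ℕ) (n : ℕ) : preL x (n + 1) = (preL x n).concat (x n) := by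
  rw [preL, List.ofFn_succ']
  simp [preL]

lemma dropLast_preL (x : ℕ → ℕ) (n : ℕ) : (preL x (n + 1)).dropLast = preL x n := by
  rw [preL_succ, List.concat_eq_append, List.dropLast_concat]

lemma preL_getD {x : ℕ → ℕ} {m i : ℕ} (h : i < m) : (preL x m).getD i 0 = x i := by
  rw [List.getD_eq_getElem?_getD, List.getElem?_eq_getElem (by rw [preL_len]; exact h)]
  simp [preL, List.getElem_ofFn]

lemma cyl_mem_nhds (x : ℕ → ℕ) (n : ℕ) : {y : ℕ → ℕ | ∀ i < n, y i = x i} ∈ 𝓝 x := by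
  rw [nhds_pi, Filter.mem_pi]
  refine ⟨{i | i < n}, Set.finite_lt_nat n, fun i => {x i}, fun i => ?_, ?_⟩
  · exact IsOpen.mem_nhds (isOpen_discrete _) rfl
  · intro y hy i hi; exact hy i hi

lemma exists_cyl_subset {s : Set (ℕ → ℕ)} {x : ℕ → ℕ} (h : s ∈ 𝓝 x) :
    ∃ n, ∀ y : ℕ → ℕ, (∀ i < n, y i = x i) → y ∈ s := by
  rw [nhds_pi, Filter.mem_pi] at h
  obtain ⟨I, hI, V, hV, hVs⟩ := h
  obtain ⟨n, hn⟩ := hI.bddAbove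
  refine ⟨n + 1, fun y hy => hVs ?_⟩
  intro i hi
  have h1 : y i = x i := hy i (Nat.lt_succ_of_le (hn hi))
  rw [h1]
  exact mem_of_mem_nhds (hV i)

/-- The run prefix played so far. -/
lemma respond_eq (σ : Strategy) (x : ℕ → ℕ) (n : ℕ) :
    respond σ x n = σ (preL x (n + 1)) := rfl

/-! #### From a strategy to a continuous function -/

lemma output_continuousOn (σ : Strategy) :
    ContinuousOn (output σ) {x | InfPlays σ x} := by
  classical
  intro x hx
  rw [continuousWithinAt_pi]
  intro k
  set P : ℕ → Prop := fun n => (respond σ x n).isSome = true with hP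
  have hPinf : (setOf P).Infinite := hx
  set N : ℕ := Nat.nth P k with hN
  have hkey : ∀ y : ℕ → ℕ, InfPlays σ y → (∀ i < N + 1, y i = x i) →
      output σ y k = output σ x k := by
    intro y hy hagree
    have hresp : ∀ n ≤ N, respond σ y n = respond σ x n := by
      intro n hn
      rw [respond_eq, respond_eq, preL_eq_iff.2 fun i hi => hagree i (by omega)]
    set P' : ℕ → Prop := fun n => (respond σ y n).isSome = true with hP'
    have hcount : ∀ n ≤ N, Nat.count P' n = Nat.count P n := by
      intro n hn
      induction n with
      | zero => simp [Nat.count_zero]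
      | succ m ih =>
        rw [Nat.count_succ, Nat.count_succ, ih (by omega)]
        congr 1
        simp only [hP', hP, hresp m (by omega)]
    have hPN : P N := Nat.nth_mem_of_infinite hPinf k
    have hP'N : P' N := by simp only [hP', hresp N le_rfl]; exact hPN
    have hcN : Nat.count P N = k := Nat.count_nth_of_infinite hPinf k
    have hnth' : Nat.nth P' k = N := by
      have := Nat.nth_count (p := P') hP'N
      rwa [hcount N le_rfl, hcN] at this
    show output σ y k = output σ x k
    rw [output, output, hnth', ← hN, hresp N le_rfl]
  have hmem : {y : ℕ → ℕ | ∀ i < N + 1, y i = x i} ∈ 𝓝[{x | InfPlays σ x}] x :=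
    nhdsWithin_le_nhds (cyl_mem_nhds x (N + 1))
  have hself : {x | InfPlays σ x} ∈ 𝓝[{x | InfPlays σ x}] x := self_mem_nhdsWithin
  have hev : (fun y => output σ y k) =ᶠ[𝓝[{x | InfPlays σ x}] x]
      (fun _ => output σ x k) := by
    filter_upwards [hmem, hself] with y h1 h2
    exact hkey y h2 h1
  exact (Filter.Tendsto.congr' hev.symm tendsto_const_nhds)

/-! #### From a continuous function to a strategy -/

def ExtS (F : PFunB) (s : List ℕ) : Set (ℕ → ℕ) := {x | x ∈ F.dom ∧ preL x s.length = s}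

def Det (F : PFunB) (s : List ℕ) (j : ℕ) : Prop := ∃ m, ∀ x ∈ ExtS F s, F.toFun x j = m

open Classical in
noncomputable def detVal (F : PFunB) (s : List ℕ) (j : ℕ) : ℕ :=
  if h : Det F s j then h.choose else 0

lemma detVal_spec {F : PFunB} {s : List ℕ} {j : ℕ} (h : Det F s j) {x : ℕ → ℕ}
    (hx : x ∈ ExtS F s) : F.toFun x j = detVal F s j := by
  rw [detVal, dif_pos h]; exact h.choose_spec x hx

open Classical in
noncomputable def cntA (F : PFunB) (x : ℕ → ℕ) : ℕ → ℕ
  | 0 => 0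
  | n + 1 => cntA F x n + (if Det F (preL x (n + 1)) (cntA F x n) then 1 else 0)

lemma cntA_congr (F : PFunB) {x y : ℕ → ℕ} :
    ∀ n, preL x n = preL y n → cntA F x n = cntA F y n
  | 0, _ => rfl
  | n + 1, h => by
    have h' : preL x n = preL y n :=
      preL_eq_iff.2 fun i hi => preL_eq_iff.1 h i (Nat.lt_succ_of_lt hi)
    rw [cntA, cntA, cntA_congr F n h', h]

lemma cntA_mono (F : PFunB) (x : ℕ → ℕ) : Monotone (cntA F x) := by
  apply monotone_nat_of_le_succ
  intro n
  rw [cntA]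
  omega

open Classical in
noncomputable def stratOf (F : PFunB) : Strategy := fun s =>
  if Det F s (cntA F (fun i => s.getD i 0) (s.length - 1)) then
    some (detVal F s (cntA F (fun i => s.getD i 0) (s.length - 1))) else none

open Classical in
lemma respond_stratOf (F : PFunB) (x : ℕ → ℕ) (n : ℕ) :
    respond (stratOf F) x n =
      if Det F (preL x (n + 1)) (cntA F x n) then
        some (detVal F (preL x (n + 1)) (cntA F x n)) else none := by
  rw [respond_eq, stratOf]
  have h1 : (preL x (n + 1)).length - 1 = n := by simp [preL_len]
  have h2 : cntA F (fun i => (preL x (n + 1)).getD i 0) n = cntA F x n := by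
    apply cntA_congr
    exact preL_eq_iff.2 fun i hi => preL_getD (by omega)
  rw [h1, h2]

open Classical in
lemma isSome_respond_stratOf (F : PFunB) (x : ℕ → ℕ) (n : ℕ) :
    (respond (stratOf F) x n).isSome = true ↔ Det F (preL x (n + 1)) (cntA F x n) := by
  rw [respond_stratOf]
  split <;> simp_all

open Classical in
lemma cntA_succ_eq (F : PFunB) (x : ℕ → ℕ) (n : ℕ) :
    cntA F x (n + 1) = cntA F x n +
      (if (respond (stratOf F) x n).isSome = true then 1 else 0) := by
  rw [cntA]
  congr 1
  by_cases h : Det F (preL x (n + 1)) (cntA F x n)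
  · rw [if_pos h, if_pos ((isSome_respond_stratOf F x n).2 h)]
  · rw [if_neg h, if_neg (fun hc => h ((isSome_respond_stratOf F x n).1 hc))]

open Classical in
lemma cntA_eq_count (F : PFunB) (x : ℕ → ℕ) (n : ℕ) :
    cntA F x n = Nat.count (fun m => (respond (stratOf F) x m).isSome = true) n := by
  induction n with
  | zero => rfl
  | succ m ih => rw [cntA_succ_eq, Nat.count_succ, ih]

open Classical in
lemma cntA_unbounded (F : PFunB) (hF : F.IsContinuous) {x : ℕ → ℕ} (hx : x ∈ F.dom) :
    ∀ c, ∃ n, c < cntA F x n := by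
  have step : ∀ n, ∃ m, cntA F x n < cntA F x m := by
    intro n
    set c := cntA F x n with hc
    -- continuity of coordinate c at x within F.dom
    have hcw : ContinuousWithinAt (fun y => F.toFun y c) F.dom x :=
      (continuous_apply c).continuousAt.comp_continuousWithinAt (hF x hx)
    have hnb : (fun y => F.toFun y c) ⁻¹' {F.toFun x c} ∈ 𝓝[F.dom] x :=
      Filter.mem_map.1 (hcw (IsOpen.mem_nhds (isOpen_discrete _) rfl))
    rw [mem_nhdsWithin] at hnb
    obtain ⟨U, hUo, hxU, hUsub⟩ := hnb
    obtain ⟨M, hM⟩ := exists_cyl_subset (hUo.mem_nhds hxU)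
    set m := max n M with hm
    by_cases hstall : cntA F x m = c
    · refine ⟨m + 1, ?_⟩
      have hdet : Det F (preL x (m + 1)) c := by
        refine ⟨F.toFun x c, ?_⟩
        rintro y ⟨hyF, hypre⟩
        rw [preL_len] at hypre
        have hag : ∀ i < m + 1, y i = x i := preL_eq_iff.1 hypre
        have hyU : y ∈ U := hM y fun i hi => hag i (by omega)
        exact hUsub ⟨hyU, hyF⟩
      rw [cntA, hstall, if_pos hdet]
      omega
    · have hle : c ≤ cntA F x m := by rw [hc]; exact cntA_mono F x (le_max_left n M)
      exact ⟨m, by omega⟩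
  intro c
  induction c with
  | zero =>
    obtain ⟨m, hm⟩ := step 0
    exact ⟨m, by have := cntA_mono F x (Nat.zero_le m); omega⟩
  | succ k ih =>
    obtain ⟨n, hn⟩ := ih
    obtain ⟨m, hm⟩ := step n
    exact ⟨m, by omega⟩

open Classical in
lemma stratOf_spec (F : PFunB) (hF : F.IsContinuous) {x : ℕ → ℕ} (hx : x ∈ F.dom) :
    InfPlays (stratOf F) x ∧ output (stratOf F) x = F.toFun x := by
  set P : ℕ → Prop := fun m => (respond (stratOf F) x m).isSome = true with hP
  have hinf : (setOf P).Infinite := by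
    apply Set.infinite_of_not_bddAbove
    rintro ⟨N, hN⟩
    have hconst : ∀ k, cntA F x (N + 1 + k) = cntA F x (N + 1) := by
      intro k
      induction k with
      | zero => rfl
      | succ j ih =>
        have hnotP : ¬ P (N + 1 + j) := fun hc => by
          have := hN hc; omega
        have : N + 1 + (j + 1) = (N + 1 + j) + 1 := by omega
        rw [this, cntA_succ_eq, ih, if_neg hnotP]; omega
    obtain ⟨n, hn⟩ := cntA_unbounded F hF hx (cntA F x (N + 1))
    rcases le_or_gt n (N + 1) with h | h
    · have := cntA_mono F x h; omega
    · have h2 := hconst (n - (N + 1))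
      have h3 : N + 1 + (n - (N + 1)) = n := by omega
      rw [h3] at h2; omega
  refine ⟨hinf, ?_⟩
  funext k
  set nk := Nat.nth P k with hnk
  have hPnk : P nk := Nat.nth_mem_of_infinite hinf k
  have hdet : Det F (preL x (nk + 1)) (cntA F x nk) := (isSome_respond_stratOf F x nk).1 hPnk
  have hcnt : cntA F x nk = k := by
    rw [cntA_eq_count]
    exact Nat.count_nth_of_infinite hinf k
  have hout : output (stratOf F) x k = (respond (stratOf F) x nk).getD 0 := rfl
  rw [hout, respond_stratOf, if_pos hdet, Option.getD_some]
  rw [← detVal_spec hdet ⟨hx, by rw [preL_len]⟩, hcnt]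

/-! #### Continuity helpers -/

lemma continuous_pairB : Continuous (fun pq : (ℕ → ℕ) × (ℕ → ℕ) => pairB pq.1 pq.2) := by
  apply continuous_pi
  intro n
  by_cases h : n % 2 = 0
  · simp only [pairB, if_pos h]
    exact (continuous_apply (n / 2)).comp continuous_fst
  · simp only [pairB, if_neg h]
    exact (continuous_apply (n / 2)).comp continuous_snd

lemma continuous_leftB : Continuous leftB :=
  continuous_pi fun n => continuous_apply (2 * n)

lemma continuous_rightB : Continuous rightB :=
  continuous_pi fun n => continuous_apply (2 * n + 1)

lemma PFunB.comp_isContinuous {F G : PFunB} (hF : F.IsContinuous) (hG : G.IsContinuous) :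
    (F.comp G).IsContinuous :=
  hF.comp (hG.mono fun _ h => h.1) (fun _ h => h.2)

/-! #### Realizer existence and modification -/

lemma exists_realizer_min {X Y : Type*} (δX : RepSpace X) (δY : RepSpace Y)
    (T : X → Set Y) :
    ∃ G : PFunB, G.dom = {r | r ∈ δX.dom ∧ (T (δX.map r)).Nonempty} ∧
      Realizes δX δY G T := by
  classical
  have hch : ∀ r : ℕ → ℕ, ∃ q : ℕ → ℕ,
      (r ∈ δX.dom ∧ (T (δX.map r)).Nonempty) →
        q ∈ δY.dom ∧ δY.map q ∈ T (δX.map r) := by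
    intro r
    by_cases h : r ∈ δX.dom ∧ (T (δX.map r)).Nonempty
    · obtain ⟨y, hy⟩ := h.2
      obtain ⟨q, hq, hqm⟩ := δY.surj y
      exact ⟨q, fun _ => ⟨hq, by rw [hqm]; exact hy⟩⟩
    · exact ⟨fun _ => 0, fun h' => absurd h' h⟩
  choose g hg using hch
  refine ⟨⟨{r | r ∈ δX.dom ∧ (T (δX.map r)).Nonempty}, g⟩, rfl, ?_⟩
  intro r hr hT
  exact ⟨⟨hr, hT⟩, (hg r ⟨hr, hT⟩).1, (hg r ⟨hr, hT⟩).2⟩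

lemma exists_realizer_at {X Y : Type*} (δX : RepSpace X) (δY : RepSpace Y)
    (T : X → Set Y) {r0 q0 : ℕ → ℕ} (h0 : r0 ∈ δX.dom)
    (hT0 : (T (δX.map r0)).Nonempty) (hq : q0 ∈ δY.dom)
    (hqm : δY.map q0 ∈ T (δX.map r0)) :
    ∃ G : PFunB, Realizes δX δY G T ∧ G.toFun r0 = q0 := by
  classical
  obtain ⟨G, hdom, hG⟩ := exists_realizer_min δX δY T
  refine ⟨⟨G.dom, fun r => if r = r0 then q0 else G.toFun r⟩, ?_, by simp⟩
  intro r hr hT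
  by_cases h : r = r0
  · subst h
    exact ⟨(hG r hr hT).1, by simp [hq], by simp [hqm]⟩
  · simpa [h] using hG r hr hT

/-! #### Forward direction -/

lemma wadge_forward {X Y A B : Type*}
    (δX : RepSpace X) (δY : RepSpace Y) (δA : RepSpace A) (δB : RepSpace B)
    (ζ : Y → Set (ℕ → ℕ)) (hζc : MCts δY idRep ζ)
    (T : X → Set Y) (f : A → Set B)
    (h : ∃ σ : Strategy, WadgeWinning δX δA δB ζ T f σ) :
    Wc δA δB δX δY f T := by
  obtain ⟨σ, hσ⟩ := h
  obtain ⟨Z, hZc, hZr⟩ := hζc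
  refine ⟨⟨{pq | pq.2 ∈ Z.dom}, fun pq => Z.toFun pq.2⟩,
    ⟨{x | InfPlays σ x}, output σ⟩, ?_, output_continuousOn σ, ?_⟩
  · exact hZc.comp continuous_snd.continuousOn (fun pq h => h)
  · intro G hG p hp hfp
    have hnp : (MComp f δA.toMV p).Nonempty := by
      obtain ⟨b, hb⟩ := hfp
      exact ⟨b, fun a ha => ha.2 ▸ ⟨b, hb⟩, δA.map p, ⟨hp, rfl⟩, hb⟩
    obtain ⟨hinf, hne, hsub⟩ := hσ p hnp
    obtain ⟨b0, hb0all, w0, hw0, -⟩ := hne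
    obtain ⟨hS3all, z0, hz0, -⟩ := hw0
    obtain ⟨hS2all, x0, hx0, -⟩ := hz0
    have hy0dom : output σ p ∈ δX.dom := hx0.1
    have hTne : (T (δX.map (output σ p))).Nonempty := hS2all (δX.map (output σ p)) ⟨hy0dom, rfl⟩
    obtain ⟨hy0G, hq, hqm⟩ := hG (output σ p) hy0dom hTne
    have hy1 : δY.map (G.toFun (output σ p)) ∈ MComp T δX.toMV (output σ p) :=
      ⟨hS2all, δX.map (output σ p), ⟨hy0dom, rfl⟩, hqm⟩
    have hζne : (ζ (δY.map (G.toFun (output σ p)))).Nonempty := hS3all _ hy1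
    obtain ⟨hqZ, -, hZmem⟩ := hZr (G.toFun (output σ p)) hq hζne
    have hw : Z.toFun (G.toFun (output σ p)) ∈ MComp ζ (MComp T δX.toMV) (output σ p) :=
      ⟨hS3all, δY.map (G.toFun (output σ p)), hy1, hZmem⟩
    obtain ⟨b, hbd, hbm⟩ := hb0all _ hw
    have hbg : δB.map (Z.toFun (G.toFun (output σ p))) ∈ GameMap δX δB ζ T (output σ p) :=
      ⟨hb0all, Z.toFun (G.toFun (output σ p)), hw, hbd, rfl⟩
    obtain ⟨-, a, ha, hbf⟩ := hsub hbg
    refine ⟨⟨hinf, hy0G, hqZ⟩, hbd, ?_⟩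
    have : a = δA.map p := ha.2.symm
    rw [this] at hbf
    exact hbf

/-! #### Backward direction -/

lemma wadge_backward {X Y A B : Type*}
    (δX : RepSpace X) (δY : RepSpace Y) (δA : RepSpace A) (δB : RepSpace B)
    (ζ : Y → Set (ℕ → ℕ)) (hζ : IsProbe δY ζ)
    (T : X → Set Y) (hcyl : IsCylinder δX δY T) (htr : Transparent δX δY T)
    (f : A → Set B) (hW : Wc δA δB δX δY f T) :
    ∃ σ : Strategy, WadgeWinning δX δA δB ζ T f σ := by
  obtain ⟨K2, H, hK2c, hHc, hWc⟩ := hW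
  obtain ⟨G0, hdom0, hG0⟩ := exists_realizer_min δX δY T
  -- Step 1: semantic content of the continuous Weihrauch reduction
  have Q2 : ∀ p, p ∈ δA.dom → (f (δA.map p)).Nonempty →
      p ∈ H.dom ∧ H.toFun p ∈ δX.dom ∧ (T (δX.map (H.toFun p))).Nonempty ∧
      ∀ q, q ∈ δY.dom → δY.map q ∈ T (δX.map (H.toFun p)) →
        (p, q) ∈ K2.dom ∧ K2.toFun (p, q) ∈ δB.dom ∧
          δB.map (K2.toFun (p, q)) ∈ f (δA.map p) := by
    intro p hp hf
    obtain ⟨⟨hpH, hHS, -⟩, -, -⟩ := hWc G0 hG0 p hp hf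
    rw [hdom0] at hHS
    refine ⟨hpH, hHS.1, hHS.2, ?_⟩
    intro q hq hqm
    obtain ⟨Gq, hGq, hGqv⟩ := exists_realizer_at δX δY T hHS.1 hHS.2 hq hqm
    obtain ⟨⟨-, -, hK2d⟩, hBd, hBm⟩ := hWc Gq hGq p hp hf
    simp only [hGqv] at hK2d hBd hBm
    exact ⟨hK2d, hBd, hBm⟩
  -- Step 2: use the cylinder to make the reduction strong
  obtain ⟨Kc, Hc, hKcc, hHcc, hcylR⟩ := hcyl
  set H1 : PFunB :=
    ⟨{p | p ∈ H.dom ∧ pairB p (H.toFun p) ∈ Hc.dom},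
      fun p => Hc.toFun (pairB p (H.toFun p))⟩ with hH1def
  set K1 : PFunB :=
    ⟨{q | q ∈ Kc.dom ∧ (leftB (Kc.toFun q), rightB (Kc.toFun q)) ∈ K2.dom},
      fun q => K2.toFun (leftB (Kc.toFun q), rightB (Kc.toFun q))⟩ with hK1def
  have hH1c : H1.IsContinuous := by
    have hinner : ContinuousOn (fun p => pairB p (H.toFun p)) H.dom :=
      continuous_pairB.comp_continuousOn (continuousOn_id.prodMk hHc)
    exact hHcc.comp (hinner.mono fun p h => h.1) (fun p h => h.2)
  have hK1c : K1.IsContinuous := by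
    have hinner : ContinuousOn (fun q => (leftB (Kc.toFun q), rightB (Kc.toFun q))) Kc.dom :=
      (continuous_leftB.comp_continuousOn hKcc).prodMk
        (continuous_rightB.comp_continuousOn hKcc)
    exact hK2c.comp (hinner.mono fun q h => h.1) (fun q h => h.2)
  have Q1 : ∀ p, p ∈ δA.dom → (f (δA.map p)).Nonempty →
      p ∈ H1.dom ∧ H1.toFun p ∈ δX.dom ∧ (T (δX.map (H1.toFun p))).Nonempty ∧
      ∀ q, q ∈ δY.dom → δY.map q ∈ T (δX.map (H1.toFun p)) →
        q ∈ K1.dom ∧ K1.toFun q ∈ δB.dom ∧ δB.map (K1.toFun q) ∈ f (δA.map p) := by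
    intro p hp hf
    obtain ⟨hpH, hHX, hHT, hQ⟩ := Q2 p hp hf
    have hrdom : pairB p (H.toFun p) ∈ (idRep.prod δX).dom :=
      ⟨trivial, by rw [rightB_pairB]; exact hHX⟩
    have hmapr : (idRep.prod δX).map (pairB p (H.toFun p)) = (p, δX.map (H.toFun p)) := by
      show (idRep.map (leftB (pairB p (H.toFun p))), δX.map (rightB (pairB p (H.toFun p)))) = _
      rw [leftB_pairB, rightB_pairB]
      rfl
    have hne : (idProd T ((idRep.prod δX).map (pairB p (H.toFun p)))).Nonempty := by
      rw [hmapr]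
      obtain ⟨y, hy⟩ := hHT
      exact ⟨(p, y), rfl, hy⟩
    obtain ⟨⟨⟨hrHc, hHcG0⟩, -⟩, -, -⟩ := hcylR G0 hG0 (pairB p (H.toFun p)) hrdom hne
    rw [hdom0] at hHcG0
    refine ⟨⟨hpH, hrHc⟩, hHcG0.1, hHcG0.2, ?_⟩
    intro q hq hqm
    obtain ⟨Gq, hGq, hGqv⟩ := exists_realizer_at δX δY T hHcG0.1 hHcG0.2 hq hqm
    obtain ⟨⟨⟨-, hrGq⟩, hKcd⟩, hsdom, hsmem⟩ := hcylR Gq hGq (pairB p (H.toFun p)) hrdom hne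
    have hval : (Gq.comp Hc).toFun (pairB p (H.toFun p)) = q := hGqv
    rw [hval] at hKcd
    simp only [PFunB.comp, hGqv] at hsdom hsmem
    rw [hmapr] at hsmem
    have hL : leftB (Kc.toFun q) = p := hsmem.1
    have hR : δY.map (rightB (Kc.toFun q)) ∈ T (δX.map (H.toFun p)) := hsmem.2
    have hRd : rightB (Kc.toFun q) ∈ δY.dom := hsdom.2
    obtain ⟨hKd, hBd, hBm⟩ := hQ (rightB (Kc.toFun q)) hRd hR
    have hK1v : K1.toFun q = K2.toFun (p, rightB (Kc.toFun q)) := by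
      show K2.toFun (leftB (Kc.toFun q), rightB (Kc.toFun q)) = _
      rw [hL]
    exact ⟨⟨hKcd, by rw [hL]; exact hKd⟩, by rw [hK1v]; exact hBd,
      by rw [hK1v]; exact hBm⟩
  -- Step 3: the probe applied to the induced continuous map on Y
  set g : Y → Set (ℕ → ℕ) := fun y =>
    {w | (∀ q, q ∈ δY.dom → δY.map q = y → q ∈ K1.dom) ∧
      ∃ q, q ∈ δY.dom ∧ δY.map q = y ∧ K1.toFun q = w} with hgdef
  have hgMC : MCts δY idRep g := by
    refine ⟨K1, hK1c, ?_⟩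
    intro q hq hne
    obtain ⟨w, hall, -⟩ := hne
    exact ⟨hall q hq rfl, trivial, hall, q, hq, rfl, rfl⟩
  obtain ⟨e, heMC, hte⟩ := hζ.2 g hgMC
  -- Step 4: transparency
  obtain ⟨d, hdMC, htd⟩ := htr e heMC
  obtain ⟨D, hDc, hDr⟩ := hdMC
  -- Step 5: the strategy
  set C : PFunB := D.comp H1 with hCdef
  have hCc : C.IsContinuous := PFunB.comp_isContinuous hDc hH1c
  refine ⟨stratOf C, ?_⟩
  intro x hx
  obtain ⟨b1, hball, a1, ha1, hb1⟩ := hx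
  have hxA : x ∈ δA.dom := ha1.1
  have hfA : (f (δA.map x)).Nonempty := ha1.2 ▸ ⟨b1, hb1⟩
  obtain ⟨hxH1, hH1X, hH1T, hQ1⟩ := Q1 x hxA hfA
  -- every point of T x' is in the domain of g
  have hgne : ∀ y ∈ T (δX.map (H1.toFun x)), (g y).Nonempty := by
    intro y hy
    obtain ⟨q, hq, hqm⟩ := δY.surj y
    refine ⟨K1.toFun q, fun q' hq' hm' => (hQ1 q' hq' (by rw [hm']; exact hy)).1,
      q, hq, hqm, rfl⟩
  have hene : ∀ y ∈ T (δX.map (H1.toFun x)), (e y).Nonempty := by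
    intro y hy
    obtain ⟨w, hwall, z, hz, -⟩ := (hte y (hgne y hy)).1
    exact ⟨z, hz⟩
  have heTne : (MComp e T (δX.map (H1.toFun x))).Nonempty := by
    obtain ⟨y, hy⟩ := hH1T
    obtain ⟨z, hz⟩ := hene y hy
    exact ⟨z, hene, y, hy, hz⟩
  obtain ⟨⟨z1, hdall, x2, hx2, hz1⟩, hsubTd⟩ := htd (δX.map (H1.toFun x)) heTne
  obtain ⟨hH1D, hDX, hDd⟩ := hDr (H1.toFun x) hH1X ⟨x2, hx2⟩
  have hxC : x ∈ C.dom := ⟨hxH1, hH1D⟩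
  obtain ⟨hinf, hout⟩ := stratOf_spec C hCc hxC
  have hTne2 : (T (δX.map (C.toFun x))).Nonempty := hdall _ hDd
  -- key property of points in T (δX (C x))
  have hkey : ∀ z ∈ T (δX.map (C.toFun x)), (ζ z).Nonempty ∧
      ∀ w ∈ ζ z, w ∈ δB.dom ∧ δB.map w ∈ f (δA.map x) := by
    intro z hz
    have hzTd : z ∈ MComp T d (δX.map (H1.toFun x)) := ⟨hdall, δX.map (C.toFun x), hDd, hz⟩
    obtain ⟨heall, yz, hyz, hzey⟩ := hsubTd hzTd
    obtain ⟨hζeNe, hζeSub⟩ := hte yz (hgne yz hyz)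
    obtain ⟨w1, hζall, -⟩ := hζeNe
    refine ⟨hζall z hzey, ?_⟩
    intro w hw
    obtain ⟨-, q, hq, hqm, hqw⟩ := hζeSub ⟨hζall, z, hzey, hw⟩
    obtain ⟨-, hBd, hBm⟩ := hQ1 q hq (by rw [hqm]; exact hyz)
    rw [hqw] at hBd hBm
    exact ⟨hBd, hBm⟩
  rw [hout]
  refine ⟨hinf, ?_, ?_⟩
  · -- nonemptiness of the game map at the output
    obtain ⟨z0, hz0⟩ := hTne2
    obtain ⟨w0, hw0⟩ := (hkey z0 hz0).1
    have hz0S2 : z0 ∈ MComp T δX.toMV (C.toFun x) :=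
      ⟨fun a ha => ha.2 ▸ ⟨z0, hz0⟩, δX.map (C.toFun x), ⟨hDX, rfl⟩, hz0⟩
    have hS3cl : ∀ z ∈ MComp T δX.toMV (C.toFun x), (ζ z).Nonempty := by
      rintro z ⟨-, a, ha, hz⟩
      exact (hkey z (ha.2 ▸ hz)).1
    have hw0S3 : w0 ∈ MComp ζ (MComp T δX.toMV) (C.toFun x) := ⟨hS3cl, z0, hz0S2, hw0⟩
    have hS3prop : ∀ w ∈ MComp ζ (MComp T δX.toMV) (C.toFun x),
        w ∈ δB.dom ∧ δB.map w ∈ f (δA.map x) := by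
      rintro w ⟨-, z, hzS2, hw⟩
      obtain ⟨-, a, ha, hz⟩ := hzS2
      exact (hkey z (ha.2 ▸ hz)).2 w hw
    have hBcl : ∀ w ∈ MComp ζ (MComp T δX.toMV) (C.toFun x), (δB.toMV w).Nonempty :=
      fun w hw => ⟨δB.map w, (hS3prop w hw).1, rfl⟩
    exact ⟨δB.map w0, hBcl, w0, hw0S3, (hS3prop w0 hw0S3).1, rfl⟩
  · -- correctness of the game map at the output
    rintro b ⟨hBcl, w, hwS3, hwd, hmap⟩
    have hS3prop : ∀ w ∈ MComp ζ (MComp T δX.toMV) (C.toFun x),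
        w ∈ δB.dom ∧ δB.map w ∈ f (δA.map x) := by
      rintro w ⟨-, z, hzS2, hw⟩
      obtain ⟨-, a, ha, hz⟩ := hzS2
      exact (hkey z (ha.2 ▸ hz)).2 w hw
    exact ⟨fun a ha => ha.2 ▸ hfA, δA.map x, ⟨hxA, rfl⟩, hmap ▸ (hS3prop w hwS3).2⟩

end WadgeAux
/-- **Main theorem.** Let `ζ` be a probe for `Y` and let `T :⊆ X ⇉ Y` be a transparent
cylinder. Then player II has a winning strategy in the `(ζ, T)`-Wadge game for `f` iff
`f ≤_W^c T`. -/
theorem wadge_game_iff_wc {X Y A B : Type*}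
    (δX : RepSpace X) (δY : RepSpace Y) (δA : RepSpace A) (δB : RepSpace B)
    (ζ : Y → Set (ℕ → ℕ)) (hζ : IsProbe δY ζ)
    (T : X → Set Y) (hcyl : IsCylinder δX δY T) (htr : Transparent δX δY T)
    (f : A → Set B) :
    (∃ σ : Strategy, WadgeWinning δX δA δB ζ T f σ) ↔ Wc δA δB δX δY f T :=
  ⟨wadge_forward δX δY δA δB ζ hζ.1 T f,
    wadge_backward δX δY δA δB ζ hζ T hcyl htr f⟩
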